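/- Let G be a graph with a subtree model (T, S), and let C, C' be two distinct maximal cliques of G. Then the clique subtrees S(C) = ∩_{v∈C} S_v and S(C') are nonempty and disjoint. -/

import Mathlib

open SimpleGraph

/-- A subtree model of `G` on a tree `T`: each vertex gets a nonempty connected
subtree, and subtrees of distinct vertices intersect iff the vertices are adjacent. -/
def IsSubtreeModel {V W : Type*} (G : SimpleGraph V) (T : SimpleGraph W) (S : V → Set W) : Prop :=
  T.IsTree ∧ (∀ v : V, (T.induce (S v)).Connected) ∧
    ∀ u v : V, u ≠ v → ((S u ∩ S v).Nonempty ↔ G.Adj u v)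

/-- A maximal clique of `G`. -/
def IsMaxClique {V : Type*} (G : SimpleGraph V) (C : Set V) : Prop :=
  G.IsClique C ∧ ∀ D : Set V, G.IsClique D → C ⊆ D → C = D

section HellyLemmas

variable {W : Type*} {T : SimpleGraph W}

/-- Any path between two vertices of a connected induced subgraph of a tree stays inside it. -/
private lemma path_support_subset (hT : T.IsTree) {A : Set W}
    (hA : (T.induce A).Connected) {x y : W} (hx : x ∈ A) (hy : y ∈ A)
    (p : T.Walk x y) (hp : p.IsPath) : ∀ z ∈ p.support, z ∈ A := by
  haveI := Classical.decEq W
  obtain ⟨q⟩ := hA ⟨x, hx⟩ ⟨y, hy⟩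
  have hq : (q.map (SimpleGraph.Embedding.induce A).toHom).bypass.IsPath :=
    SimpleGraph.Walk.bypass_isPath _
  have := (hT.existsUnique_path x y).unique hp hq
  intro z hz
  rw [this] at hz
  have hz' := SimpleGraph.Walk.support_bypass_subset _ hz
  erw [SimpleGraph.Walk.support_map] at hz'
  obtain ⟨⟨z', hz'A⟩, _, rfl⟩ := List.mem_map.mp hz'
  exact hz'A

/-- A walk whose support lies in `A` yields reachability in the induced subgraph. -/
private lemma reachable_induce_of_walk {A : Set W} :
    ∀ {x y : W} (p : T.Walk x y) (hsub : ∀ z ∈ p.support, z ∈ A),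
    (T.induce A).Reachable ⟨x, hsub x p.start_mem_support⟩ ⟨y, hsub y p.end_mem_support⟩ := by
  intro x y p
  induction p with
  | nil => intro _; rfl
  | cons h p ih =>
    intro hsub
    have hsub' : ∀ z ∈ p.support, z ∈ A := fun z hz =>
      hsub z (by rw [SimpleGraph.Walk.support_cons]; exact List.mem_cons_of_mem _ hz)
    refine SimpleGraph.Reachable.trans ?_ (ih hsub')
    exact SimpleGraph.Adj.reachable (by simpa using h)

/-- Intersection of two subtrees of a tree is a subtree (if nonempty). -/
private lemma induce_inter_connected (hT : T.IsTree) {A B : Set W}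
    (hA : (T.induce A).Connected) (hB : (T.induce B).Connected)
    (hne : (A ∩ B).Nonempty) : (T.induce (A ∩ B)).Connected := by
  rw [SimpleGraph.connected_iff]
  refine ⟨?_, by simpa [Set.nonempty_coe_sort, Set.Nonempty] using hne⟩
  rintro ⟨x, hxA, hxB⟩ ⟨y, hyA, hyB⟩
  obtain ⟨p, hp, -⟩ := hT.existsUnique_path x y
  have hsub : ∀ z ∈ p.support, z ∈ A ∩ B := fun z hz =>
    ⟨path_support_subset hT hA hxA hyA p hp z hz,
     path_support_subset hT hB hxB hyB p hp z hz⟩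
  exact reachable_induce_of_walk p hsub

/-- Median construction: given paths `P : a → b` and `Q : b → c`, there is a vertex `m`
on both, and a path `R : a → c` through `m` with support inside the union. -/
private lemma exists_median {c : W} :
    ∀ {a b : W} (P : T.Walk a b), P.IsPath → ∀ (Q : T.Walk b c), Q.IsPath →
    ∃ (m : W) (R : T.Walk a c), R.IsPath ∧
      (∀ z ∈ R.support, z ∈ P.support ∨ z ∈ Q.support) ∧
      m ∈ P.support ∧ m ∈ Q.support ∧ m ∈ R.support := by
  haveI := Classical.decEq W
  intro a b P
  induction P with
  | nil =>
    intro _ Q hQ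
    exact ⟨_, Q, hQ, fun z hz => Or.inr hz, Walk.start_mem_support _,
      Q.start_mem_support, Q.start_mem_support⟩
  | @cons a a' b h P ih =>
    intro hP Q hQ
    by_cases haQ : a ∈ Q.support
    · refine ⟨a, Q.dropUntil a haQ, hQ.dropUntil haQ, ?_, Walk.start_mem_support _, haQ,
        Walk.start_mem_support _⟩
      intro z hz
      exact Or.inr (SimpleGraph.Walk.support_dropUntil_subset _ _ hz)
    · obtain ⟨m, R', hR', hsub, hmP, hmQ, hmR⟩ := ih hP.of_cons Q hQ
      have haR' : a ∉ R'.support := by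
        intro haR
        rcases hsub a haR with hc | hc
        · exact ((SimpleGraph.Walk.cons_isPath_iff _ _).mp hP).2 hc
        · exact haQ hc
      refine ⟨m, Walk.cons h R', (SimpleGraph.Walk.cons_isPath_iff _ _).mpr ⟨hR', haR'⟩,
        ?_, ?_, hmQ, ?_⟩
      · intro z hz
        rw [SimpleGraph.Walk.support_cons] at hz
        rcases List.mem_cons.mp hz with rfl | hz
        · exact Or.inl (Walk.start_mem_support _)
        · rcases hsub z hz with hc | hc
          · exact Or.inl (by rw [SimpleGraph.Walk.support_cons]; exact List.mem_cons_of_mem _ hc)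
          · exact Or.inr hc
      · rw [SimpleGraph.Walk.support_cons]; exact List.mem_cons_of_mem _ hmP
      · rw [SimpleGraph.Walk.support_cons]; exact List.mem_cons_of_mem _ hmR

/-- Helly for three subtrees of a tree. -/
private lemma helly3 (hT : T.IsTree) {A B C : Set W}
    (hA : (T.induce A).Connected) (hB : (T.induce B).Connected)
    (hC : (T.induce C).Connected)
    (hAB : (A ∩ B).Nonempty) (hAC : (A ∩ C).Nonempty) (hBC : (B ∩ C).Nonempty) :
    (A ∩ B ∩ C).Nonempty := by
  obtain ⟨c, hcA, hcB⟩ := hAB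
  obtain ⟨b, hbA, hbC⟩ := hAC
  obtain ⟨a, haB, haC⟩ := hBC
  obtain ⟨P, hP, -⟩ := hT.existsUnique_path a b
  obtain ⟨Q, hQ, -⟩ := hT.existsUnique_path b c
  obtain ⟨m, R, hR, -, hmP, hmQ, hmR⟩ := exists_median P hP Q hQ
  have hPC : ∀ z ∈ P.support, z ∈ C := path_support_subset hT hC haC hbC P hP
  have hQA : ∀ z ∈ Q.support, z ∈ A := path_support_subset hT hA hbA hcA Q hQ
  have hRB : ∀ z ∈ R.support, z ∈ B := path_support_subset hT hB haB hcB R hR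
  exact ⟨m, ⟨hQA m hmQ, hRB m hmR⟩, hPC m hmP⟩

/-- Helly property for finite families of subtrees of a tree. -/
private lemma helly (hT : T.IsTree) :
    ∀ (n : ℕ) (F : Finset (Set W)), F.card ≤ n → F.Nonempty →
    (∀ A ∈ F, (T.induce A).Connected) →
    (∀ A ∈ F, ∀ B ∈ F, (A ∩ B).Nonempty) →
    (⋂ A ∈ F, A).Nonempty := by
  intro n
  induction n with
  | zero =>
    intro F hcard hne _ _
    simp [Finset.card_eq_zero.mp (Nat.le_zero.mp hcard)] at hne
  | succ n ih =>
    intro F hcard hne hconn hpair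
    by_cases h1 : F.card ≤ 1
    · obtain ⟨A, rfl⟩ := Finset.card_eq_one.mp (le_antisymm h1 (Finset.card_pos.mpr hne))
      have : A.Nonempty := by
        have := (hconn A (Finset.mem_singleton_self A)).nonempty
        simpa [Set.nonempty_coe_sort, Set.Nonempty] using this
      simpa using this
    · push_neg at h1
      obtain ⟨A, hAF, B, hBF, hABne⟩ := Finset.one_lt_card.mp h1
      classical
      set F' : Finset (Set W) := insert (A ∩ B) ((F.erase A).erase B) with hF'
      have hmemF : ∀ X ∈ (F.erase A).erase B, X ∈ F := fun X hX =>
        Finset.mem_of_mem_erase (Finset.mem_of_mem_erase hX)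
      have hAB : (A ∩ B).Nonempty := hpair A hAF B hBF
      have hconn' : ∀ X ∈ F', (T.induce X).Connected := by
        intro X hX
        rcases Finset.mem_insert.mp hX with rfl | hX
        · exact induce_inter_connected hT (hconn A hAF) (hconn B hBF) hAB
        · exact hconn X (hmemF X hX)
      have hpair' : ∀ X ∈ F', ∀ Y ∈ F', (X ∩ Y).Nonempty := by
        intro X hX Y hY
        rcases Finset.mem_insert.mp hX with rfl | hX <;>
          rcases Finset.mem_insert.mp hY with rfl | hY
        · rw [Set.inter_self]; exact hAB
        · exact helly3 hT (hconn A hAF) (hconn B hBF) (hconn Y (hmemF Y hY))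
            hAB (hpair A hAF Y (hmemF Y hY)) (hpair B hBF Y (hmemF Y hY))
        · have := helly3 hT (hconn A hAF) (hconn B hBF) (hconn X (hmemF X hX))
            hAB (hpair A hAF X (hmemF X hX)) (hpair B hBF X (hmemF X hX))
          rwa [Set.inter_comm]
        · exact hpair X (hmemF X hX) Y (hmemF Y hY)
      have hcard' : F'.card ≤ n := by
        have h2 : ((F.erase A).erase B).card ≤ F.card - 2 := by
          have hBA : B ∈ F.erase A := Finset.mem_erase.mpr ⟨hABne.symm, hBF⟩
          have := Finset.card_erase_of_mem hBA
          rw [this, Finset.card_erase_of_mem hAF]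
          omega
        calc F'.card ≤ ((F.erase A).erase B).card + 1 := Finset.card_insert_le _ _
          _ ≤ F.card - 2 + 1 := by omega
          _ ≤ n := by omega
      obtain ⟨w, hw⟩ := ih F' hcard' (Finset.insert_nonempty _ _) hconn' hpair'
      rw [Set.mem_iInter₂] at hw
      refine ⟨w, Set.mem_iInter₂.mpr fun X hX => ?_⟩
      by_cases hXA : X = A
      · subst hXA
        exact (hw (X ∩ B) (Finset.mem_insert_self _ _)).1
      by_cases hXB : X = B
      · subst hXB
        exact (hw (A ∩ X) (Finset.mem_insert_self _ _)).2
      exact hw X (Finset.mem_insert_of_mem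
        (Finset.mem_erase.mpr ⟨hXB, Finset.mem_erase.mpr ⟨hXA, hX⟩⟩))

end HellyLemmas

private lemma clique_subtree_nonempty {V W : Type*} [Fintype V] (G : SimpleGraph V)
    (T : SimpleGraph W) (S : V → Set W) (h : IsSubtreeModel G T S)
    {C : Set V} (hC : G.IsClique C) (hCne : C.Nonempty) :
    (⋂ v ∈ C, S v).Nonempty := by
  classical
  obtain ⟨hT, hconn, hadj⟩ := h
  set F : Finset (Set W) := (Set.toFinite C).toFinset.image S with hF
  have hmem : ∀ X ∈ F, ∃ v ∈ C, X = S v := by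
    intro X hX
    obtain ⟨v, hv, rfl⟩ := Finset.mem_image.mp hX
    exact ⟨v, (Set.Finite.mem_toFinset _).mp hv, rfl⟩
  have key : (⋂ A ∈ F, A).Nonempty := by
    refine helly hT F.card F le_rfl ?_ ?_ ?_
    · obtain ⟨v, hv⟩ := hCne
      exact ⟨S v, Finset.mem_image.mpr ⟨v, (Set.Finite.mem_toFinset _).mpr hv, rfl⟩⟩
    · intro A hA
      obtain ⟨v, _, rfl⟩ := hmem A hA
      exact hconn v
    · intro A hA B hB
      obtain ⟨u, hu, rfl⟩ := hmem A hA
      obtain ⟨v, hv, rfl⟩ := hmem B hB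
      by_cases huv : u = v
      · subst huv
        rw [Set.inter_self]
        simpa [Set.nonempty_coe_sort, Set.Nonempty] using (hconn u).nonempty
      · exact (hadj u v huv).mpr (hC hu hv huv)
  obtain ⟨w, hw⟩ := key
  rw [Set.mem_iInter₂] at hw
  refine ⟨w, Set.mem_iInter₂.mpr fun v hv => ?_⟩
  exact hw (S v) (Finset.mem_image.mpr ⟨v, (Set.Finite.mem_toFinset _).mpr hv, rfl⟩)

/-- In a subtree model, the clique subtrees of two distinct maximal cliques are
nonempty and disjoint. -/
theorem clique_subtrees_disjoint {V W : Type*} [Fintype V] [Fintype W] (G : SimpleGraph V)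
    (T : SimpleGraph W) (S : V → Set W) (h : IsSubtreeModel G T S)
    (C C' : Set V) (hC : IsMaxClique G C) (hC' : IsMaxClique G C') (hne : C ≠ C') :
    (⋂ v ∈ C, S v).Nonempty ∧ (⋂ v ∈ C', S v).Nonempty ∧
      (⋂ v ∈ C, S v) ∩ (⋂ v ∈ C', S v) = ∅ := by
  have hCne : C.Nonempty := by
    rw [Set.nonempty_iff_ne_empty]
    rintro rfl
    exact hne (hC.2 C' hC'.1 (Set.empty_subset _))
  have hC'ne : C'.Nonempty := by
    rw [Set.nonempty_iff_ne_empty]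
    rintro rfl
    exact hne (hC'.2 C hC.1 (Set.empty_subset _)).symm
  refine ⟨clique_subtree_nonempty G T S h hC.1 hCne,
    clique_subtree_nonempty G T S h hC'.1 hC'ne, ?_⟩
  rw [Set.eq_empty_iff_forall_notMem]
  rintro w ⟨hw1, hw2⟩
  rw [Set.mem_iInter₂] at hw1 hw2
  have hclique : G.IsClique (C ∪ C') := by
    intro u hu v hv huv
    rcases hu with hu | hu <;> rcases hv with hv | hv
    · exact hC.1 hu hv huv
    · exact (h.2.2 u v huv).mp ⟨w, hw1 u hu, hw2 v hv⟩
    · exact (h.2.2 u v huv).mp ⟨w, hw2 u hu, hw1 v hv⟩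
    · exact hC'.1 hu hv huv
  have h1 : C = C ∪ C' := hC.2 (C ∪ C') hclique Set.subset_union_left
  have h2 : C' = C ∪ C' := hC'.2 (C ∪ C') hclique Set.subset_union_right
  exact hne (h1.trans h2.symm)
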